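/- arXiv:2604.17006 — 2 statements merged into one kernel-verified Lean document; each statement's English description precedes it below -/
import Mathlib

section
/- For every point q = (B,i,j) of the quiver representation space 𝕄 and every ξ ∈ ℂ, the hyperkähler rotation HK_ξ(q) satisfies, at every vertex k: μ_ℂ(HK_ξ(q))_k = μ_ℂ(q)_k − 2i·ξ·μ_ℝ(q)_k − ξ²·(μ_ℂ(q)_k)†. -/
open Matrix Filter Topology

namespace QuiverCL

noncomputable section

variable {n : ℕ} {E : Type*}

/-- Cast a matrix along equalities of vertices. -/
def castM2 (v : Fin n → ℕ) {a b a' b' : Fin n} (ea : a = a') (eb : b = b')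
    (M : Matrix (Fin (v a)) (Fin (v b)) ℂ) : Matrix (Fin (v a')) (Fin (v b')) ℂ :=
  Matrix.reindex (finCongr (congrArg v ea)) (finCongr (congrArg v eb)) M

/-- The quiver representation space `𝕄`: a triple `(B, i, j)` of families of matrices,
`B h : V (src h) → V (tgt h)`, `i k : W k → V k`, `j k : V k → W k`
(matrices act on column vectors, so `Hom(V_a, V_b)` is `Matrix (Fin (v b)) (Fin (v a)) ℂ`). -/
abbrev Rep (src tgt : E → Fin n) (v w : Fin n → ℕ) : Type _ :=
  (∀ h : E, Matrix (Fin (v (tgt h))) (Fin (v (src h))) ℂ)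
  × (∀ k : Fin n, Matrix (Fin (v k)) (Fin (w k)) ℂ)
  × (∀ k : Fin n, Matrix (Fin (w k)) (Fin (v k)) ℂ)

/-- `ε(h) = 1` for `h ∈ Ω` and `ε(h) = -1` for `h ∈ Ω̄`. -/
def eps (Ω : E → Prop) [DecidablePred Ω] (h : E) : ℂ := if Ω h then 1 else -1

/-- The matrix `B_{h̄}` attached to the reversed edge, recast so that it is a matrix
`V (tgt h) → V (src h)`. -/
def Bbar (src tgt : E → Fin n) (bar : E → E) (v w : Fin n → ℕ)
    (hbs : ∀ h, src (bar h) = tgt h) (hbt : ∀ h, tgt (bar h) = src h)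
    (p : Rep src tgt v w) (h : E) : Matrix (Fin (v (src h))) (Fin (v (tgt h))) ℂ :=
  castM2 v (hbt h) (hbs h) (p.1 (bar h))

/-- The real moment map, componentwise:
`μ_ℝ(B,i,j)_k = (i/2)·[Σ_{in(h)=k} (B_h B_h† − B_{h̄}† B_{h̄}) + i_k i_k† − j_k† j_k]`. -/
def muR [Fintype E] (src tgt : E → Fin n) (bar : E → E) (v w : Fin n → ℕ)
    (hbs : ∀ h, src (bar h) = tgt h) (hbt : ∀ h, tgt (bar h) = src h)
    (p : Rep src tgt v w) (k : Fin n) : Matrix (Fin (v k)) (Fin (v k)) ℂ :=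
  (Complex.I / 2) •
    ((∑ h : E, if e : tgt h = k then
        castM2 v e e
          (p.1 h * (p.1 h)ᴴ -
            (Bbar src tgt bar v w hbs hbt p h)ᴴ * Bbar src tgt bar v w hbs hbt p h)
      else 0)
      + (p.2.1 k * (p.2.1 k)ᴴ - (p.2.2 k)ᴴ * p.2.2 k))

/-- The complex moment map, componentwise:
`μ_ℂ(B,i,j)_k = Σ_{in(h)=k} ε(h)·B_h B_{h̄} + i_k j_k`. -/
def muC [Fintype E] (src tgt : E → Fin n) (bar : E → E) (Ω : E → Prop) [DecidablePred Ω]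
    (v w : Fin n → ℕ)
    (hbs : ∀ h, src (bar h) = tgt h) (hbt : ∀ h, tgt (bar h) = src h)
    (p : Rep src tgt v w) (k : Fin n) : Matrix (Fin (v k)) (Fin (v k)) ℂ :=
  (∑ h : E, if e : tgt h = k then
      eps Ω h • castM2 v e e (p.1 h * Bbar src tgt bar v w hbs hbt p h)
    else 0)
    + p.2.1 k * p.2.2 k

/-- The hyperkähler rotation `HK_ξ(B,i,j) = (B_h − ε(h)·ξ·B_{h̄}†, i_k − ξ·j_k†, j_k + ξ·i_k†)`. -/
def HK (src tgt : E → Fin n) (bar : E → E) (Ω : E → Prop) [DecidablePred Ω]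
    (v w : Fin n → ℕ)
    (hbs : ∀ h, src (bar h) = tgt h) (hbt : ∀ h, tgt (bar h) = src h)
    (ξ : ℂ) (p : Rep src tgt v w) : Rep src tgt v w :=
  ⟨fun h => p.1 h - (eps Ω h * ξ) • (Bbar src tgt bar v w hbs hbt p h)ᴴ,
   fun k => p.2.1 k - ξ • (p.2.2 k)ᴴ,
   fun k => p.2.2 k + ξ • (p.2.1 k)ᴴ⟩

/-- The gauge action `g·(B,i,j) = (g_{in(h)} B_h g_{out(h)}⁻¹, g_k i_k, j_k g_k⁻¹)`. -/
def gauge (src tgt : E → Fin n) (v w : Fin n → ℕ)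
    (g : ∀ k : Fin n, Matrix (Fin (v k)) (Fin (v k)) ℂ) (p : Rep src tgt v w) :
    Rep src tgt v w :=
  ⟨fun h => g (tgt h) * p.1 h * (g (src h))⁻¹,
   fun k => g k * p.2.1 k,
   fun k => p.2.2 k * (g k)⁻¹⟩

/-- The infinitesimal gauge action `l_p(ξ) = (ξ_{in(h)} B_h − B_h ξ_{out(h)}, ξ_k i_k, −j_k ξ_k)`. -/
def lp (src tgt : E → Fin n) (v w : Fin n → ℕ)
    (p : Rep src tgt v w) (ξ : ∀ k : Fin n, Matrix (Fin (v k)) (Fin (v k)) ℂ) :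
    Rep src tgt v w :=
  ⟨fun h => ξ (tgt h) * p.1 h - p.1 h * ξ (src h),
   fun k => ξ k * p.2.1 k,
   fun k => -(p.2.2 k * ξ k)⟩

/-- The adjoint of the infinitesimal gauge action, componentwise:
`l_p^*(q)_k = Σ_{in(h)=k} (A_h B_h† − B_{h̄}† A_{h̄}) + I_k i_k† − j_k† J_k`. -/
def lpStar [Fintype E] (src tgt : E → Fin n) (bar : E → E) (v w : Fin n → ℕ)
    (hbs : ∀ h, src (bar h) = tgt h) (hbt : ∀ h, tgt (bar h) = src h)
    (p q : Rep src tgt v w) (k : Fin n) : Matrix (Fin (v k)) (Fin (v k)) ℂ :=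
  (∑ h : E, if e : tgt h = k then
      castM2 v e e
        (q.1 h * (p.1 h)ᴴ -
          (Bbar src tgt bar v w hbs hbt p h)ᴴ * Bbar src tgt bar v w hbs hbt q h)
    else 0)
    + (q.2.1 k * (p.2.1 k)ᴴ - (p.2.2 k)ᴴ * q.2.2 k)

/-- The hermitian inner product
`⟨q, q′⟩ = Σ_h Tr(A_h A′_h†) + Σ_k Tr(I_k I′_k†) + Σ_k Tr(J_k J′_k†)` on `𝕄`. -/
def innerRep [Fintype E] (src tgt : E → Fin n) (v w : Fin n → ℕ)
    (q q' : Rep src tgt v w) : ℂ :=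
  (∑ h : E, (q.1 h * (q'.1 h)ᴴ).trace)
    + (∑ k : Fin n, (q.2.1 k * (q'.2.1 k)ᴴ).trace)
    + (∑ k : Fin n, (q.2.2 k * (q'.2.2 k)ᴴ).trace)

/-- The complex symplectic form
`ω_ℂ(q, q′) = Σ_h ε(h)·Tr(A_h A′_{h̄}) + Σ_k Tr(I_k J′_k − I′_k J_k)`. -/
def omegaC [Fintype E] (src tgt : E → Fin n) (bar : E → E) (Ω : E → Prop) [DecidablePred Ω]
    (v w : Fin n → ℕ)
    (hbs : ∀ h, src (bar h) = tgt h) (hbt : ∀ h, tgt (bar h) = src h)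
    (q q' : Rep src tgt v w) : ℂ :=
  (∑ h : E, eps Ω h * (q.1 h * Bbar src tgt bar v w hbs hbt q' h).trace)
    + ∑ k : Fin n, ((q.2.1 k * q'.2.2 k).trace - (q'.2.1 k * q.2.2 k).trace)

/-- The scaling action `t∘(B,i,j)`: multiply the `Ω̄`-components and the `j`-components by `t`. -/
def scale (src tgt : E → Fin n) (Ω : E → Prop) [DecidablePred Ω] (v w : Fin n → ℕ)
    (t : ℂ) (p : Rep src tgt v w) : Rep src tgt v w :=
  ⟨fun h => if Ω h then p.1 h else t • p.1 h,
   fun k => p.2.1 k,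
   fun k => t • p.2.2 k⟩

/-- The second complex structure `J(m, m′) = (−(m′)†, m†)` on `𝕄 = 𝕄_Ω ⊕ 𝕄_Ω̄`. -/
def Jmap (src tgt : E → Fin n) (bar : E → E) (Ω : E → Prop) [DecidablePred Ω]
    (v w : Fin n → ℕ)
    (hbs : ∀ h, src (bar h) = tgt h) (hbt : ∀ h, tgt (bar h) = src h)
    (q : Rep src tgt v w) : Rep src tgt v w :=
  ⟨fun h => (-(eps Ω h)) • (Bbar src tgt bar v w hbs hbt q h)ᴴ,
   fun k => -((q.2.2 k)ᴴ),
   fun k => (q.2.1 k)ᴴ⟩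

/-- The point `p_A(ℏ)` of `𝕄`: for `h ∈ Ω` the `h`-component is `B⁰_h + A_h − ℏ·(B⁰_{h̄})†` and
for `h ∈ Ω̄` it is `ℏ⁻¹·(B⁰_h + A_h) + (B⁰_{h̄})†`; the `i`-components are
`i⁰_k + I_k − ℏ·(j⁰_k)†` and the `j`-components are `ℏ⁻¹·(j⁰_k + J_k) + (i⁰_k)†`. -/
def pA (src tgt : E → Fin n) (bar : E → E) (Ω : E → Prop) [DecidablePred Ω]
    (v w : Fin n → ℕ)
    (hbs : ∀ h, src (bar h) = tgt h) (hbt : ∀ h, tgt (bar h) = src h)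
    (p0 A : Rep src tgt v w) (ℏ : ℂ) : Rep src tgt v w :=
  ⟨fun h => if Ω h
      then p0.1 h + A.1 h - ℏ • (Bbar src tgt bar v w hbs hbt p0 h)ᴴ
      else ℏ⁻¹ • (p0.1 h + A.1 h) + (Bbar src tgt bar v w hbs hbt p0 h)ᴴ,
   fun k => p0.2.1 k + A.2.1 k - ℏ • (p0.2.2 k)ᴴ,
   fun k => ℏ⁻¹ • (p0.2.2 k + A.2.2 k) + (p0.2.1 k)ᴴ⟩

/-- The linearization of the real moment map equation:
`ℒ(p,ξ)_k = Σ_{in(h)=k} [B_h(B_h† ξ_{in(h)} − ξ_{out(h)} B_h†) −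
(B_{h̄}† ξ_{out(h)} − ξ_{in(h)} B_{h̄}†) B_{h̄}] + i_k i_k† ξ_k + ξ_k j_k† j_k`. -/
def linL [Fintype E] (src tgt : E → Fin n) (bar : E → E) (v w : Fin n → ℕ)
    (hbs : ∀ h, src (bar h) = tgt h) (hbt : ∀ h, tgt (bar h) = src h)
    (p : Rep src tgt v w) (ξ : ∀ k : Fin n, Matrix (Fin (v k)) (Fin (v k)) ℂ)
    (k : Fin n) : Matrix (Fin (v k)) (Fin (v k)) ℂ :=
  (∑ h : E, if e : tgt h = k then
      castM2 v e e
        (p.1 h * ((p.1 h)ᴴ * ξ (tgt h) - ξ (src h) * (p.1 h)ᴴ)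
          - ((Bbar src tgt bar v w hbs hbt p h)ᴴ * ξ (src h)
              - ξ (tgt h) * (Bbar src tgt bar v w hbs hbt p h)ᴴ)
            * Bbar src tgt bar v w hbs hbt p h)
    else 0)
    + (p.2.1 k * (p.2.1 k)ᴴ * ξ k + ξ k * (p.2.2 k)ᴴ * p.2.2 k)

/-- The product of the matrices of `p` along a list of edges `[h_1, …, h_m]`, as a matrix
`V_a → V_b`; when the list is a path with `a = out(h_1)` and `b = in(h_m)` this is the genuine
composite `B_{h_m} ⋯ B_{h_1}`. -/
def prodAlong (src tgt : E → Fin n) (v w : Fin n → ℕ) (p : Rep src tgt v w) :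
    List E → (a : Fin n) → (b : Fin n) → Matrix (Fin (v b)) (Fin (v a)) ℂ
  | [], a, b => if e : a = b then castM2 v e rfl (1 : Matrix (Fin (v a)) (Fin (v a)) ℂ) else 0
  | (h : E) :: rest, a, b =>
      prodAlong src tgt v w p rest (tgt h) b *
        (if e : src h = a then castM2 v rfl e (p.1 h) else 0)


section Aux
variable (v : Fin n → ℕ)

lemma castM2_id {a b : Fin n} (ea : a = a) (eb : b = b)
    (M : Matrix (Fin (v a)) (Fin (v b)) ℂ) : castM2 v ea eb M = M := rfl

lemma castM2_trans {a b a' b' a'' b'' : Fin n} (ea : a = a') (eb : b = b')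
    (ea' : a' = a'') (eb' : b' = b'') (M : Matrix (Fin (v a)) (Fin (v b)) ℂ) :
    castM2 v ea' eb' (castM2 v ea eb M) = castM2 v (ea.trans ea') (eb.trans eb') M := by
  subst ea; subst eb; subst ea'; subst eb'; rfl

lemma castM2_mul {a b c a' b' c' : Fin n} (ea : a = a') (eb : b = b') (ec : c = c')
    (M : Matrix (Fin (v a)) (Fin (v b)) ℂ) (N : Matrix (Fin (v b)) (Fin (v c)) ℂ) :
    castM2 v ea eb M * castM2 v eb ec N = castM2 v ea ec (M * N) := by
  subst ea; subst eb; subst ec; rfl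

lemma castM2_conjT {a b a' b' : Fin n} (ea : a = a') (eb : b = b')
    (M : Matrix (Fin (v a)) (Fin (v b)) ℂ) :
    (castM2 v ea eb M)ᴴ = castM2 v eb ea Mᴴ := by
  subst ea; subst eb; rfl

lemma castM2_add {a b a' b' : Fin n} (ea : a = a') (eb : b = b')
    (M N : Matrix (Fin (v a)) (Fin (v b)) ℂ) :
    castM2 v ea eb (M + N) = castM2 v ea eb M + castM2 v ea eb N := by
  subst ea; subst eb; rfl

lemma castM2_sub {a b a' b' : Fin n} (ea : a = a') (eb : b = b')
    (M N : Matrix (Fin (v a)) (Fin (v b)) ℂ) :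
    castM2 v ea eb (M - N) = castM2 v ea eb M - castM2 v ea eb N := by
  subst ea; subst eb; rfl

lemma castM2_smul {a b a' b' : Fin n} (ea : a = a') (eb : b = b') (c : ℂ)
    (M : Matrix (Fin (v a)) (Fin (v b)) ℂ) :
    castM2 v ea eb (c • M) = c • castM2 v ea eb M := by
  subst ea; subst eb; rfl

variable {src tgt : E → Fin n} {bar : E → E} {Ω : E → Prop} [DecidablePred Ω] {w : Fin n → ℕ}

lemma eps_sq (h : E) : eps Ω h * eps Ω h = 1 := by
  unfold eps; split_ifs <;> norm_num

lemma eps_star (h : E) : star (eps Ω h) = eps Ω h := by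
  unfold eps; split_ifs <;> simp

lemma eps_bar (hor : ∀ h, Ω (bar h) ↔ ¬ Ω h) (h : E) : eps Ω (bar h) = - eps Ω h := by
  unfold eps
  by_cases hh : Ω h <;> simp [hh, hor]

lemma rep_fst_congr (p : Rep src tgt v w) {h h' : E} (e : h = h') :
    p.1 h' = castM2 v (congrArg tgt e) (congrArg src e) (p.1 h) := by
  subst e; rfl

lemma Bbar_bar (hbs : ∀ h, src (bar h) = tgt h) (hbt : ∀ h, tgt (bar h) = src h)
    (hinv : ∀ h, bar (bar h) = h) (p : Rep src tgt v w) (h : E) :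
    Bbar src tgt bar v w hbs hbt p (bar h)
      = castM2 v (hbs h).symm (hbt h).symm (p.1 h) := by
  unfold Bbar
  rw [rep_fst_congr v p (hinv h).symm, castM2_trans]

lemma Bbar_HK (hbs : ∀ h, src (bar h) = tgt h) (hbt : ∀ h, tgt (bar h) = src h)
    (hinv : ∀ h, bar (bar h) = h) (hor : ∀ h, Ω (bar h) ↔ ¬ Ω h)
    (ξ : ℂ) (q : Rep src tgt v w) (h : E) :
    Bbar src tgt bar v w hbs hbt (HK src tgt bar Ω v w hbs hbt ξ q) h
      = Bbar src tgt bar v w hbs hbt q h + (eps Ω h * ξ) • (q.1 h)ᴴ := by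
  show castM2 v (hbt h) (hbs h) _ = _
  have h1 : (HK src tgt bar Ω v w hbs hbt ξ q).1 (bar h)
      = q.1 (bar h) - (eps Ω (bar h) * ξ) • (Bbar src tgt bar v w hbs hbt q (bar h))ᴴ := rfl
  rw [h1, castM2_sub, castM2_smul, Bbar_bar v hbs hbt hinv, castM2_conjT, castM2_trans,
    castM2_id, eps_bar hor]
  show castM2 v (hbt h) (hbs h) (q.1 (bar h)) - (-eps Ω h * ξ) • (q.1 h)ᴴ
      = castM2 v (hbt h) (hbs h) (q.1 (bar h)) + (eps Ω h * ξ) • (q.1 h)ᴴ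
  module

end Aux

/-- `μ_ℂ(HK_ξ(q))_k = μ_ℂ(q)_k − 2i·ξ·μ_ℝ(q)_k − ξ²·(μ_ℂ(q)_k)†`. -/
theorem muC_HK {n : ℕ} {E : Type*} [Fintype E]
    (src tgt : E → Fin n) (bar : E → E) (Ω : E → Prop) [DecidablePred Ω]
    (v w : Fin n → ℕ)
    (hloop : ∀ h, src h ≠ tgt h)
    (hinv : ∀ h, bar (bar h) = h) (hfree : ∀ h, bar h ≠ h)
    (hbs : ∀ h, src (bar h) = tgt h) (hbt : ∀ h, tgt (bar h) = src h)
    (hor : ∀ h, Ω (bar h) ↔ ¬ Ω h)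
    (q : Rep src tgt v w) (ξ : ℂ) (k : Fin n) :
    muC src tgt bar Ω v w hbs hbt (HK src tgt bar Ω v w hbs hbt ξ q) k
      = muC src tgt bar Ω v w hbs hbt q k
        - (2 * Complex.I * ξ) • muR src tgt bar v w hbs hbt q k
        - (ξ ^ 2) • (muC src tgt bar Ω v w hbs hbt q k)ᴴ := by
  classical
  set i := q.2.1 k
  set j := q.2.2 k
  set Bb := Bbar src tgt bar v w hbs hbt q with hBb
  set S1 := ∑ h : E, (if e : tgt h = k then eps Ω h • castM2 v e e (q.1 h * Bb h) else 0) with hS1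
  set S2 := ∑ h : E, (if e : tgt h = k then
      castM2 v e e (q.1 h * (q.1 h)ᴴ - (Bb h)ᴴ * Bb h) else 0) with hS2
  set S3 := ∑ h : E, (if e : tgt h = k then
      eps Ω h • castM2 v e e ((Bb h)ᴴ * (q.1 h)ᴴ) else 0) with hS3
  have key : ∀ h : E,
      (if e : tgt h = k then eps Ω h • castM2 v e e
        ((HK src tgt bar Ω v w hbs hbt ξ q).1 h *
          Bbar src tgt bar v w hbs hbt (HK src tgt bar Ω v w hbs hbt ξ q) h) else 0)
      = (if e : tgt h = k then eps Ω h • castM2 v e e (q.1 h * Bb h) else 0)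
        + ξ • (if e : tgt h = k then
            castM2 v e e (q.1 h * (q.1 h)ᴴ - (Bb h)ᴴ * Bb h) else 0)
        - (ξ ^ 2) • (if e : tgt h = k then
            eps Ω h • castM2 v e e ((Bb h)ᴴ * (q.1 h)ᴴ) else 0) := by
    intro h
    by_cases e : tgt h = k
    · simp only [dif_pos e]
      rw [Bbar_HK v hbs hbt hinv hor]
      have h1 : (HK src tgt bar Ω v w hbs hbt ξ q).1 h
          = q.1 h - (eps Ω h * ξ) • (Bb h)ᴴ := rfl
      rw [h1, ← hBb]
      have expand : (q.1 h - (eps Ω h * ξ) • (Bb h)ᴴ) * (Bb h + (eps Ω h * ξ) • (q.1 h)ᴴ)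
          = q.1 h * Bb h + ((eps Ω h * ξ) • (q.1 h * (q.1 h)ᴴ)
            - (eps Ω h * ξ) • ((Bb h)ᴴ * Bb h))
            - ((eps Ω h * ξ) * (eps Ω h * ξ)) • ((Bb h)ᴴ * (q.1 h)ᴴ) := by
        simp only [Matrix.sub_mul, Matrix.mul_add, Matrix.smul_mul, Matrix.mul_smul,
          smul_smul]
        module
      rw [expand]
      simp only [castM2_sub, castM2_add, castM2_smul]
      have hε : eps Ω h = 1 ∨ eps Ω h = -1 := by unfold eps; split_ifs <;> simp
      rcases hε with hε | hε <;> rw [hε] <;> module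
    · simp only [dif_neg e]
      simp
  have hL : muC src tgt bar Ω v w hbs hbt (HK src tgt bar Ω v w hbs hbt ξ q) k
      = (S1 + ξ • S2 - ξ ^ 2 • S3)
        + (i - ξ • jᴴ) * (j + ξ • iᴴ) := by
    show (∑ h : E, _) + _ = _
    rw [Finset.sum_congr rfl (fun h _ => key h)]
    rw [Finset.sum_sub_distrib, Finset.sum_add_distrib, ← Finset.smul_sum, ← Finset.smul_sum]
    rfl
  have hprod : (i - ξ • jᴴ) * (j + ξ • iᴴ)
      = i * j + ξ • (i * iᴴ - jᴴ * j) - ξ ^ 2 • (jᴴ * iᴴ) := by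
    simp only [Matrix.sub_mul, Matrix.mul_add, Matrix.smul_mul, Matrix.mul_smul,
      smul_smul, smul_sub]
    module
  have hC : muC src tgt bar Ω v w hbs hbt q k = S1 + i * j := rfl
  have hR : muR src tgt bar v w hbs hbt q k
      = (Complex.I / 2) • (S2 + (i * iᴴ - jᴴ * j)) := rfl
  have hCH : (muC src tgt bar Ω v w hbs hbt q k)ᴴ = S3 + jᴴ * iᴴ := by
    rw [hC]
    rw [conjTranspose_add]
    congr 1
    · rw [hS1, hS3, conjTranspose_sum]
      refine Finset.sum_congr rfl (fun h _ => ?_)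
      by_cases e : tgt h = k
      · simp only [dif_pos e]
        rw [conjTranspose_smul, eps_star, castM2_conjT, conjTranspose_mul]
      · simp [dif_neg e]
    · rw [conjTranspose_mul]
  rw [hL, hprod, hCH, hC, hR]
  have hscal : (2 * Complex.I * ξ) * (Complex.I / 2) = -ξ := by
    have := Complex.I_mul_I
    field_simp
    linear_combination ξ * Complex.I_mul_I
  rw [smul_smul, hscal]
  module


end

end QuiverCL
end

section
/- Let p = (B,i,j) ∈ 𝕄 and let ξ = (ξ_k) be a tuple of hermitian matrices (ξ_k† = ξ_k). Then Σ_{k=1}^n Tr((ℒ(p,ξ)_k)† · ξ_k) = ⟨l_p(ξ), l_p(ξ)⟩ = ‖l_p(ξ)‖² ≥ 0. In particular, if ℒ(p,ξ)_k = 0 for all k, then l_p(ξ) = 0. -/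
open Matrix Filter Topology

namespace QuiverCL

noncomputable section

variable {n : ℕ} {E : Type*}

section Aux

private lemma trace_mul_conjT {m m' : Type*} [Fintype m] [Fintype m'] (M : Matrix m m' ℂ) :
    (M * Mᴴ).trace = ((∑ i, ∑ j, Complex.normSq (M i j) : ℝ) : ℂ) := by
  simp [Matrix.trace, Matrix.mul_apply, Matrix.diag, Complex.mul_conj]

private lemma eq_zero_of_trace_eq_zero {m m' : Type*} [Fintype m] [Fintype m'] (M : Matrix m m' ℂ)
    (h : (M * Mᴴ).trace = 0) : M = 0 := by
  rw [trace_mul_conjT] at h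
  norm_cast at h
  funext i j
  have h1 : ∀ i ∈ Finset.univ, (0:ℝ) ≤ ∑ j, Complex.normSq (M i j) := by
    intro i _; exact Finset.sum_nonneg fun j _ => Complex.normSq_nonneg _
  have h2 := (Finset.sum_eq_zero_iff_of_nonneg h1).mp h i (Finset.mem_univ i)
  have h3 : ∀ j ∈ Finset.univ, (0:ℝ) ≤ Complex.normSq (M i j) :=
    fun j _ => Complex.normSq_nonneg _
  have := (Finset.sum_eq_zero_iff_of_nonneg h3).mp h2 j (Finset.mem_univ j)
  simpa using Complex.normSq_eq_zero.mp this

private lemma castM2_refl (v : Fin n → ℕ) {a b : Fin n} (M : Matrix (Fin (v a)) (Fin (v b)) ℂ) :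
    castM2 v rfl rfl M = M := by simp [castM2]

private lemma cast_helper (v : Fin n → ℕ) (ξ : ∀ k : Fin n, Matrix (Fin (v k)) (Fin (v k)) ℂ)
    {a b a' b' : Fin n} (ea : a = a') (eb : b = b')
    (M : Matrix (Fin (v b)) (Fin (v a)) ℂ) :
    ((castM2 v eb ea M)ᴴ * (ξ b' * castM2 v eb ea M - castM2 v eb ea M * ξ a') * ξ a').trace
      = (Mᴴ * (ξ b * M - M * ξ a) * ξ a).trace := by
  subst ea; subst eb; rw [castM2_refl]

end Aux

/-- `Σ_k Tr((ℒ(p,ξ)_k)†·ξ_k) = ⟨l_p(ξ), l_p(ξ)⟩ = ‖l_p(ξ)‖² ≥ 0`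
(a nonnegative real number); in particular `ℒ(p,ξ) = 0` implies `l_p(ξ) = 0`. -/
theorem linL_positivity {n : ℕ} {E : Type*} [Fintype E]
    (src tgt : E → Fin n) (bar : E → E) (Ω : E → Prop) [DecidablePred Ω]
    (v w : Fin n → ℕ)
    (hloop : ∀ h, src h ≠ tgt h)
    (hinv : ∀ h, bar (bar h) = h) (hfree : ∀ h, bar h ≠ h)
    (hbs : ∀ h, src (bar h) = tgt h) (hbt : ∀ h, tgt (bar h) = src h)
    (hor : ∀ h, Ω (bar h) ↔ ¬ Ω h)
    (p : Rep src tgt v w)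
    (ξ : ∀ k : Fin n, Matrix (Fin (v k)) (Fin (v k)) ℂ)
    (hξ : ∀ k, (ξ k)ᴴ = ξ k) :
    (∑ k : Fin n, ((linL src tgt bar v w hbs hbt p ξ k)ᴴ * ξ k).trace)
        = innerRep src tgt v w (lp src tgt v w p ξ) (lp src tgt v w p ξ)
    ∧ (innerRep src tgt v w (lp src tgt v w p ξ) (lp src tgt v w p ξ)).im = 0
    ∧ 0 ≤ (innerRep src tgt v w (lp src tgt v w p ξ) (lp src tgt v w p ξ)).re
    ∧ ((∀ k, linL src tgt bar v w hbs hbt p ξ k = 0) → lp src tgt v w p ξ = 0) := by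
  classical
  have hinvol : Function.Involutive bar := hinv
  set B : ∀ h : E, Matrix (Fin (v (tgt h))) (Fin (v (src h))) ℂ := p.1 with hB
  set C : ∀ h : E, Matrix (Fin (v (src h))) (Fin (v (tgt h))) ℂ :=
    Bbar src tgt bar v w hbs hbt p with hC
  set A : ∀ h : E, Matrix (Fin (v (tgt h))) (Fin (v (src h))) ℂ :=
    fun h => ξ (tgt h) * p.1 h - p.1 h * ξ (src h) with hA
  set X : ∀ h : E, Matrix (Fin (v (tgt h))) (Fin (v (tgt h))) ℂ := fun h =>
    B h * ((B h)ᴴ * ξ (tgt h) - ξ (src h) * (B h)ᴴ)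
      - ((C h)ᴴ * ξ (src h) - ξ (tgt h) * (C h)ᴴ) * C h with hX
  -- the main identity
  have main : (∑ k : Fin n, ((linL src tgt bar v w hbs hbt p ξ k)ᴴ * ξ k).trace)
      = innerRep src tgt v w (lp src tgt v w p ξ) (lp src tgt v w p ξ) := by
    have step0 : ∀ k : Fin n, ((linL src tgt bar v w hbs hbt p ξ k)ᴴ * ξ k).trace
        = (∑ h : E, ((if e : tgt h = k then castM2 v e e (X h) else 0)ᴴ * ξ k).trace)
          + (((p.2.1 k * (p.2.1 k)ᴴ * ξ k)ᴴ * ξ k).trace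
            + ((ξ k * (p.2.2 k)ᴴ * p.2.2 k)ᴴ * ξ k).trace) := by
      intro k
      simp only [linL, hX, hB, hC, Matrix.conjTranspose_add, Matrix.add_mul,
        Matrix.trace_add, Matrix.conjTranspose_sum, Finset.sum_mul, Matrix.trace_sum]
    have step1 : ∀ h : E,
        (∑ k : Fin n, ((if e : tgt h = k then castM2 v e e (X h) else 0)ᴴ * ξ k).trace)
          = ((X h)ᴴ * ξ (tgt h)).trace := by
      intro h
      have hk : ∀ k : Fin n, ((if e : tgt h = k then castM2 v e e (X h) else 0)ᴴ * ξ k).trace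
          = if e : tgt h = k then ((castM2 v e e (X h))ᴴ * ξ k).trace else 0 := by
        intro k; split <;> simp
      simp only [hk]
      rw [Finset.sum_dite_eq]
      simp [castM2_refl]
    have edge1 : ∀ h : E, ((X h)ᴴ * ξ (tgt h)).trace
        = (A h * (B h)ᴴ * ξ (tgt h)).trace
          - ((C h)ᴴ * (ξ (src h) * C h - C h * ξ (tgt h)) * ξ (tgt h)).trace := by
      intro h
      have : (X h)ᴴ = A h * (B h)ᴴ - (C h)ᴴ * (ξ (src h) * C h - C h * ξ (tgt h)) := by
        simp only [hX, hA, Matrix.conjTranspose_sub, Matrix.conjTranspose_mul,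
          Matrix.conjTranspose_conjTranspose, hξ]
        rfl
      rw [this, Matrix.sub_mul, Matrix.trace_sub]
    have edge2 : ∀ h : E, ((C h)ᴴ * (ξ (src h) * C h - C h * ξ (tgt h)) * ξ (tgt h)).trace
        = ((B (bar h))ᴴ * (ξ (tgt (bar h)) * B (bar h) - B (bar h) * ξ (src (bar h)))
            * ξ (src (bar h))).trace := by
      intro h
      exact cast_helper v ξ (hbs h) (hbt h) (p.1 (bar h))
    have edge3 : (∑ h : E, ((B (bar h))ᴴ * (ξ (tgt (bar h)) * B (bar h)
            - B (bar h) * ξ (src (bar h))) * ξ (src (bar h))).trace)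
        = ∑ h : E, ((B h)ᴴ * A h * ξ (src h)).trace := by
      refine Fintype.sum_bijective bar hinvol.bijective _ _ (fun h => ?_)
      simp [hA]
      rfl
    have edge4 : ∀ h : E, (A h * (B h)ᴴ * ξ (tgt h)).trace
          - ((B h)ᴴ * A h * ξ (src h)).trace = (A h * (A h)ᴴ).trace := by
      intro h
      have hAh : (A h)ᴴ = (B h)ᴴ * ξ (tgt h) - ξ (src h) * (B h)ᴴ := by
        simp [hA, Matrix.conjTranspose_sub, Matrix.conjTranspose_mul, hξ]
        rfl
      have h2 : ((B h)ᴴ * A h * ξ (src h)).trace = (A h * (ξ (src h) * (B h)ᴴ)).trace := by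
        rw [Matrix.trace_mul_cycle, Matrix.trace_mul_comm]
      rw [h2, hAh, Matrix.mul_sub, Matrix.trace_sub, Matrix.mul_assoc]
    have vtx1 : ∀ k : Fin n, ((p.2.1 k * (p.2.1 k)ᴴ * ξ k)ᴴ * ξ k).trace
        = ((ξ k * p.2.1 k) * (ξ k * p.2.1 k)ᴴ).trace := by
      intro k
      simp [Matrix.conjTranspose_mul, hξ, Matrix.mul_assoc]
    have vtx2 : ∀ k : Fin n, ((ξ k * (p.2.2 k)ᴴ * p.2.2 k)ᴴ * ξ k).trace
        = ((-(p.2.2 k * ξ k)) * (-(p.2.2 k * ξ k))ᴴ).trace := by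
      intro k
      have e : ((ξ k * (p.2.2 k)ᴴ * p.2.2 k)ᴴ * ξ k) = (p.2.2 k)ᴴ * (p.2.2 k * ξ k * ξ k) := by
        simp [Matrix.conjTranspose_mul, hξ, Matrix.mul_assoc]
      rw [e, Matrix.trace_mul_comm]
      simp [Matrix.conjTranspose_mul, hξ, Matrix.mul_assoc]
    calc (∑ k : Fin n, ((linL src tgt bar v w hbs hbt p ξ k)ᴴ * ξ k).trace)
        = (∑ k : Fin n, ∑ h : E,
              ((if e : tgt h = k then castM2 v e e (X h) else 0)ᴴ * ξ k).trace)
            + ((∑ k : Fin n, ((p.2.1 k * (p.2.1 k)ᴴ * ξ k)ᴴ * ξ k).trace)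
              + (∑ k : Fin n, ((ξ k * (p.2.2 k)ᴴ * p.2.2 k)ᴴ * ξ k).trace)) := by
          simp only [step0]
          rw [Finset.sum_add_distrib, Finset.sum_add_distrib]
      _ = (∑ h : E, (A h * (A h)ᴴ).trace)
            + ((∑ k : Fin n, ((ξ k * p.2.1 k) * (ξ k * p.2.1 k)ᴴ).trace)
              + (∑ k : Fin n, ((-(p.2.2 k * ξ k)) * (-(p.2.2 k * ξ k))ᴴ).trace)) := by
          rw [Finset.sum_comm]
          simp only [step1, edge1, edge2, vtx1, vtx2]
          rw [Finset.sum_sub_distrib, edge3, ← Finset.sum_sub_distrib]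
          simp only [edge4]
      _ = innerRep src tgt v w (lp src tgt v w p ξ) (lp src tgt v w p ξ) := by
          simp [innerRep, lp, hA, add_assoc]
  -- real-sum expression of the norm
  set q := lp src tgt v w p ξ with hq
  have hreal : innerRep src tgt v w q q
      = (((∑ h : E, ∑ i, ∑ j, Complex.normSq (q.1 h i j))
          + ((∑ k : Fin n, ∑ i, ∑ j, Complex.normSq (q.2.1 k i j))
            + (∑ k : Fin n, ∑ i, ∑ j, Complex.normSq (q.2.2 k i j))) : ℝ) : ℂ) := by
    simp only [innerRep, trace_mul_conjT]
    push_cast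
    ring
  refine ⟨main, ?_, ?_, ?_⟩
  · rw [hreal]; simp
  · rw [hreal]
    rw [Complex.ofReal_re]
    refine add_nonneg (Finset.sum_nonneg fun h _ => ?_)
      (add_nonneg (Finset.sum_nonneg fun k _ => ?_) (Finset.sum_nonneg fun k _ => ?_)) <;>
      exact Finset.sum_nonneg fun i _ => Finset.sum_nonneg fun j _ => Complex.normSq_nonneg _
  · intro h0
    have hz : innerRep src tgt v w q q = 0 := by
      rw [← main]
      simp [h0]
    rw [hreal] at hz
    norm_cast at hz
    have nn1 : (0:ℝ) ≤ ∑ h : E, ∑ i, ∑ j, Complex.normSq (q.1 h i j) :=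
      Finset.sum_nonneg fun h _ =>
        Finset.sum_nonneg fun i _ => Finset.sum_nonneg fun j _ => Complex.normSq_nonneg _
    have nn2 : (0:ℝ) ≤ ∑ k : Fin n, ∑ i, ∑ j, Complex.normSq (q.2.1 k i j) :=
      Finset.sum_nonneg fun k _ =>
        Finset.sum_nonneg fun i _ => Finset.sum_nonneg fun j _ => Complex.normSq_nonneg _
    have nn3 : (0:ℝ) ≤ ∑ k : Fin n, ∑ i, ∑ j, Complex.normSq (q.2.2 k i j) :=
      Finset.sum_nonneg fun k _ =>
        Finset.sum_nonneg fun i _ => Finset.sum_nonneg fun j _ => Complex.normSq_nonneg _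
    have e1 : (∑ h : E, ∑ i, ∑ j, Complex.normSq (q.1 h i j)) = 0 := by linarith
    have e2 : (∑ k : Fin n, ∑ i, ∑ j, Complex.normSq (q.2.1 k i j)) = 0 := by linarith
    have e3 : (∑ k : Fin n, ∑ i, ∑ j, Complex.normSq (q.2.2 k i j)) = 0 := by linarith
    have z1 : ∀ h : E, q.1 h = 0 := by
      intro h
      apply eq_zero_of_trace_eq_zero
      rw [trace_mul_conjT]
      norm_cast
      exact (Finset.sum_eq_zero_iff_of_nonneg (fun h _ =>
        Finset.sum_nonneg fun i _ => Finset.sum_nonneg fun j _ => Complex.normSq_nonneg _)).mp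
        e1 h (Finset.mem_univ h)
    have z2 : ∀ k : Fin n, q.2.1 k = 0 := by
      intro k
      apply eq_zero_of_trace_eq_zero
      rw [trace_mul_conjT]
      norm_cast
      exact (Finset.sum_eq_zero_iff_of_nonneg (fun k _ =>
        Finset.sum_nonneg fun i _ => Finset.sum_nonneg fun j _ => Complex.normSq_nonneg _)).mp
        e2 k (Finset.mem_univ k)
    have z3 : ∀ k : Fin n, q.2.2 k = 0 := by
      intro k
      apply eq_zero_of_trace_eq_zero
      rw [trace_mul_conjT]
      norm_cast
      exact (Finset.sum_eq_zero_iff_of_nonneg (fun k _ =>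
        Finset.sum_nonneg fun i _ => Finset.sum_nonneg fun j _ => Complex.normSq_nonneg _)).mp
        e3 k (Finset.mem_univ k)
    have : q = 0 := by
      refine Prod.ext (funext z1) (Prod.ext (funext z2) (funext z3))
    exact this


end

end QuiverCL
end
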